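/- Let d ≥ 2, p : [n_1]×⋯×[n_d] → ℝ, and suppose for each k = 1,…,d−1 the rank of the k-th unfolding matrix of p is r_k. Let right sketch functions T_{k+1} : [n_{k+1}]×⋯×[n_d]×[ℓ_k] → ℝ (with ℓ_k ≥ r_k) and left sketch blocks s_1 : [m_1]×[n_1] → ℝ, s_k : [m_k]×[n_k]×[m_{k−1}] → ℝ (2 ≤ k ≤ d−1) be given. Define: Φ̄_k((x_1,…,x_k),γ_k) = Σ_{x_{k+1},…,x_d} p(x_1,…,x_d) T_{k+1}((x_{k+1},…,x_d),γ_k); S_1 = s_1 and S_k(β_k,(x_1,…,x_k)) = Σ_{β_{k−1}} s_k(β_k,x_k,β_{k−1}) S_{k−1}(β_{k−1},(x_1,…,x_{k−1})); Φ̃_1 = Φ̄_1, and for 2 ≤ k ≤ d−1, Φ̃_k(β_{k−1},x_k,γ_k) = Σ_{x_1,…,x_{k−1}} S_{k−1}(β_{k−1},(x_1,…,x_{k−1})) Φ̄_k((x_1,…,x_k),γ_k), and Φ̃_d(β_{d−1},x_d) = Σ_{x_1,…,x_{d−1}} S_{d−1}(β_{d−1},(x_1,…,x_{d−1})) p(x_1,…,x_d).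 Let B_1 : [n_1]×[r_1] → ℝ have orthonormal columns spanning the column space of Φ̃_1(x_1;γ_1), for 2 ≤ k ≤ d−1 let B_k : [m_{k−1}]×[n_k]×[r_k] → ℝ have orthonormal columns (as a matrix with rows indexed by (β_{k−1},x_k) and columns by α_k) spanning the column space of the matrix Φ̃_k((β_{k−1},x_k);γ_k), and let B_d = Φ̃_d. Define A_1(β_1,α_1) = Σ_{x_1} s_1(β_1,x_1) B_1(x_1,α_1) and, for 2 ≤ k ≤ d−1, A_k(β_k,α_k) = Σ_{x_k}Σ_{β_{k−1}} s_k(β_k,x_k,β_{k−1}) B_k(β_{k−1},x_k,α_k). Assume: (i) for k = 1,…,d−1 the matrices Φ̄_k((x_1,…,x_k);γ_k) and the k-th unfolding matrix p((x_1,…,x_k);(x_{k+1},…,x_d)) have the same column space; (ii) for k = 2,…,d−1 the matrices Φ̃_k((β_{k−1},x_k);γ_k) and Φ̄_k((x_1,…,x_k);γ_k) have the same row space; (iii) for k = 1,…,d−1 the matrix A_k(β_k;α_k) has rank r_k. Then each of the equations G_1 = B_1; Σ_{α_{k−1}} A_{k−1}(β_{k−1},α_{k−1}) G_k(α_{k−1},x_k,α_k)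 = B_k(β_{k−1},x_k,α_k) for k = 2,…,d−1; and Σ_{α_{d−1}} A_{d−1}(β_{d−1},α_{d−1}) G_d(α_{d−1},x_d) = B_d(β_{d−1},x_d), has a unique solution, and the solutions G_1,…,G_d are cores of a tensor train representation of p of rank (r_1,…,r_{d−1}). -/
import Mathlib


open scoped BigOperators
open Matrix

/-- Indices `(x_0, …, x_{k-1})` of the first `k` variables (sizes given by `n`). -/
abbrev PreIdx (n : ℕ → ℕ) (k : ℕ) := ∀ i : Fin k, Fin (n i)

/-- Indices `(x_k, …, x_{d-1})` of the variables with position `≥ k`. -/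
abbrev SufIdx (n : ℕ → ℕ) (d k : ℕ) := ∀ i : {i : Fin d // k ≤ (i : ℕ)}, Fin (n i)

/-- Indices of the variables with position in the window `[a, b)`. -/
abbrev MidIdx (n : ℕ → ℕ) (d a b : ℕ) :=
  ∀ i : {i : Fin d // a ≤ (i : ℕ) ∧ (i : ℕ) < b}, Fin (n i)

/-- Glue a prefix index and a suffix index into a full index. -/
def glue {n : ℕ → ℕ} {d k : ℕ} (x : PreIdx n k) (y : SufIdx n d k) : PreIdx n d :=
  fun i => if h : (i : ℕ) < k then x ⟨i, h⟩ else y ⟨i, Nat.le_of_not_lt h⟩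

/-- The `k`-th unfolding matrix of a `d`-dimensional tensor `p`. -/
def unfold {n : ℕ → ℕ} {d : ℕ} (p : PreIdx n d → ℝ) (k : ℕ) :
    Matrix (PreIdx n k) (SufIdx n d k) ℝ :=
  Matrix.of fun x y => p (glue x y)

/-- Column space of a matrix: span of its columns. -/
noncomputable def colSpace {R C : Type*} (M : Matrix R C ℝ) : Submodule ℝ (R → ℝ) :=
  Submodule.span ℝ (Set.range fun c => fun r => M r c)

/-- Row space of a matrix: span of its rows. -/
noncomputable def rowSpace {R C : Type*} (M : Matrix R C ℝ) : Submodule ℝ (C → ℝ) :=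
  Submodule.span ℝ (Set.range fun r => fun c => M r c)

/-- Rank of a matrix (dimension of its column space). -/
noncomputable def mrank {R C : Type*} (M : Matrix R C ℝ) : ℕ :=
  Module.finrank ℝ ↥(colSpace M)

/-- Restriction of a prefix index to the first `k` variables. -/
def takePre {n : ℕ → ℕ} {k : ℕ} (x : PreIdx n (k + 1)) : PreIdx n k :=
  fun i => x ⟨i, Nat.lt_succ_of_lt i.isLt⟩

/-- Extend a prefix index by one more variable. -/
def snoc' {n : ℕ → ℕ} {k : ℕ} (z : PreIdx n k) (a : Fin (n k)) : PreIdx n (k + 1) :=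
  fun i =>
    if h : (i : ℕ) < k then z ⟨i, h⟩
    else Fin.cast (congrArg n (by have := i.isLt; omega : k = (i : ℕ))) a

/-- A family of tensor-train cores: core `k` has shape `r k × n k × r (k+1)`.
(The first and last cores carry a dummy index of size `r 0 = 1`, `r d = 1`.) -/
abbrev CoreType (n r : ℕ → ℕ) (d : ℕ) :=
  ∀ k : Fin d, Fin (r k) → Fin (n k) → Fin (r ((k : ℕ) + 1)) → ℝ

/-- Partial contraction of the first `k` cores. -/
noncomputable def ttPrefixF {d : ℕ} {n r : ℕ → ℕ} (G : CoreType n r d) :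
    (k : ℕ) → k ≤ d → PreIdx n k → Fin (r 0) → Fin (r k) → ℝ
  | 0, _, _, a, b => if (a : ℕ) = (b : ℕ) then 1 else 0
  | k + 1, h, x, a, b =>
      ∑ c : Fin (r k),
        ttPrefixF G k (Nat.le_of_succ_le h) (takePre x) a c * G ⟨k, h⟩ c (x (Fin.last k)) b

/-- Full contraction `G_1 ∘ ⋯ ∘ G_d` of a family of tensor-train cores. -/
noncomputable def ttContract {d : ℕ} {n r : ℕ → ℕ} (G : CoreType n r d)
    (x : PreIdx n d) : ℝ :=
  ∑ a : Fin (r 0), ∑ b : Fin (r d), ttPrefixF G d le_rfl x a b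

/-- The recursively contracted left sketch functions `S_k` built from blocks `s_k`. -/
noncomputable def leftSketch {n m : ℕ → ℕ}
    (s : ∀ k : ℕ, Fin (m (k + 1)) → Fin (n k) → Fin (m k) → ℝ) :
    (k : ℕ) → Fin (m k) → PreIdx n k → ℝ
  | 0, _, _ => 1
  | k + 1, β, x => ∑ c : Fin (m k), s k β (x (Fin.last k)) c * leftSketch s k c (takePre x)

/-- The right-sketched unfolding `Φ̄_k = p ∘ T_{k+1}`. -/
noncomputable def rightSketched {n : ℕ → ℕ} {d : ℕ} (p : PreIdx n d → ℝ)
    {ℓ : ℕ → ℕ} (T : ∀ k : ℕ, SufIdx n d k → Fin (ℓ k) → ℝ) (k : ℕ)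
    (x : PreIdx n k) (γ : Fin (ℓ k)) : ℝ :=
  ∑ y : SufIdx n d k, p (glue x y) * T k y γ

/-- The doubly sketched tensor `Φ̃_{j+1} = S_j ∘ Φ̄_{j+1}`. -/
noncomputable def tildePhi {n : ℕ → ℕ} {d : ℕ} {ℓ m : ℕ → ℕ} (p : PreIdx n d → ℝ)
    (T : ∀ k : ℕ, SufIdx n d k → Fin (ℓ k) → ℝ)
    (s : ∀ k : ℕ, Fin (m (k + 1)) → Fin (n k) → Fin (m k) → ℝ)
    (j : ℕ) (β : Fin (m j)) (xj : Fin (n j)) (γ : Fin (ℓ (j + 1))) : ℝ :=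
  ∑ z : PreIdx n j, leftSketch s j β z * rightSketched p T (j + 1) (snoc' z xj) γ

/-- Marginal of `p` on the window of variables `[a, b)`. -/
noncomputable def winMarg {n : ℕ → ℕ} {d : ℕ} (p : PreIdx n d → ℝ) (a b : ℕ)
    (y : MidIdx n d a b) : ℝ :=
  ∑ z : ∀ i : {i : Fin d // (i : ℕ) < a ∨ b ≤ (i : ℕ)}, Fin (n i),
    p fun i =>
      if h : a ≤ (i : ℕ) ∧ (i : ℕ) < b then y ⟨i, h⟩ else z ⟨i, by omega⟩

/-- Marginal of `p` on the window `[a, b)`, viewed as a matrix with rows indexed by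
variables in `[a, c)` and columns by variables in `[c, b)`. -/
noncomputable def winMatrix {n : ℕ → ℕ} {d : ℕ} (p : PreIdx n d → ℝ) (a c b : ℕ) :
    Matrix (MidIdx n d a c) (MidIdx n d c b) ℝ :=
  Matrix.of fun x y =>
    ∑ z : ∀ i : {i : Fin d // (i : ℕ) < a ∨ b ≤ (i : ℕ)}, Fin (n i),
      p fun i =>
        if h1 : a ≤ (i : ℕ) ∧ (i : ℕ) < c then x ⟨i, h1⟩
        else if h2 : c ≤ (i : ℕ) ∧ (i : ℕ) < b then y ⟨i, h2⟩
        else z ⟨i, by omega⟩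

/-- A (first-order) discrete Markov model: a probability density such that for all
`2 ≤ k ≤ d - 1` (1-based), `p(x) · p_k(x_k) = p_{1:k}(x_{1:k}) · p_{k:d}(x_{k:d})`. -/
def IsMarkov {n : ℕ → ℕ} {d : ℕ} (p : PreIdx n d → ℝ) : Prop :=
  (∀ x, 0 ≤ p x) ∧ (∑ x : PreIdx n d, p x) = 1 ∧
    ∀ k : ℕ, 2 ≤ k → k ≤ d - 1 → ∀ x : PreIdx n d,
      p x * winMarg p (k - 1) k (fun i => x i.1) =
        winMarg p 0 k (fun i => x i.1) * winMarg p (k - 1) d (fun i => x i.1)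

/-- An order-`m` discrete Markov model. -/
def IsMarkovOrder {n : ℕ → ℕ} {d : ℕ} (m : ℕ) (p : PreIdx n d → ℝ) : Prop :=
  (∀ x, 0 ≤ p x) ∧ (∑ x : PreIdx n d, p x) = 1 ∧
    ∀ k : ℕ, m + 1 ≤ k → k ≤ d - 1 → ∀ x : PreIdx n d,
      p x * winMarg p (k - m) k (fun i => x i.1) =
        winMarg p 0 k (fun i => x i.1) * winMarg p (k - m) d (fun i => x i.1)

/-- Spectral norm (ℓ² → ℓ² operator norm) of a matrix. -/
noncomputable def specNorm {R C : Type*} [Fintype R] [Fintype C] [DecidableEq C]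
    (M : Matrix R C ℝ) : ℝ :=
  ‖LinearMap.toContinuousLinearMap (Matrix.toEuclideanLin M)‖

/-- Moore–Penrose pseudoinverse of a full-column-rank matrix, `A⁺ = (AᵀA)⁻¹Aᵀ`. -/
noncomputable def pinv {m n : ℕ} (A : Matrix (Fin m) (Fin n) ℝ) :
    Matrix (Fin n) (Fin m) ℝ :=
  (Aᵀ * A)⁻¹ * Aᵀ

/-- The norm `|||G|||`: max over the middle index of the spectral norm of the slices. -/
noncomputable def tnorm {a b c : ℕ} (G : Fin a → Fin b → Fin c → ℝ) : ℝ :=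
  ⨆ i : Fin b, specNorm (Matrix.of fun x y => G x i y)

/-- Supremum norm of a 3-tensor. -/
noncomputable def supNorm3 {a b c : ℕ} (G : Fin a → Fin b → Fin c → ℝ) : ℝ :=
  ⨆ q : Fin a × Fin b × Fin c, |G q.1 q.2.1 q.2.2|

/-- Supremum norm of a `d`-dimensional tensor. -/
noncomputable def supNormF {n : ℕ → ℕ} {d : ℕ} (f : PreIdx n d → ℝ) : ℝ :=
  ⨆ x : PreIdx n d, |f x|

/-- The reduced equations of the TT-RS algorithm (here `d = d₀ + 2`):
`G_1 = B_1`, `A_{k-1} ∘ G_k = B_k` for `k = 2, …, d-1`, and `A_{d-1} G_d = B_d`. -/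
def TTRSEqs (d₀ : ℕ) (n r m : ℕ → ℕ)
    (B : ∀ j : ℕ, Fin (m j) → Fin (n j) → Fin (r (j + 1)) → ℝ)
    (Bd : Fin (m (d₀ + 1)) → Fin (n (d₀ + 1)) → ℝ)
    (A : ∀ j : ℕ, Fin (m (j + 1)) → Fin (r (j + 1)) → ℝ)
    (G : CoreType n r (d₀ + 2)) : Prop :=
  (∀ (a : Fin (r 0)) (c : Fin (m 0)) (x : Fin (n 0)) (α : Fin (r 1)),
      G ⟨0, by omega⟩ a x α = B 0 c x α) ∧
  (∀ j : ℕ, ∀ _hj : j + 1 ≤ d₀,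
      ∀ (β : Fin (m (j + 1))) (x : Fin (n (j + 1))) (α : Fin (r (j + 2))),
      (∑ c : Fin (r (j + 1)), A j β c * G ⟨j + 1, by omega⟩ c x α) = B (j + 1) β x α) ∧
  (∀ (β : Fin (m (d₀ + 1))) (x : Fin (n (d₀ + 1))) (b : Fin (r (d₀ + 2))),
      (∑ c : Fin (r (d₀ + 1)), A d₀ β c * G ⟨d₀ + 1, by omega⟩ c x b) = Bd β x)


section AuxLemmas

@[simp] lemma fin_cast_self {a : ℕ} (h : a = a) (x : Fin a) : Fin.cast h x = x := rfl

variable {R C R' C' : Type*}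

lemma colSpace_eq_range [Fintype C] (M : Matrix R C ℝ) :
    colSpace M = LinearMap.range M.mulVecLin := by
  rw [Matrix.range_mulVecLin]; rfl

lemma col_mem_colSpace (M : Matrix R C ℝ) (c : C) : (fun r => M r c) ∈ colSpace M :=
  Submodule.subset_span ⟨c, rfl⟩

lemma mem_colSpace_iff [Fintype C] {M : Matrix R C ℝ} {v : R → ℝ} :
    v ∈ colSpace M ↔ ∃ w : C → ℝ, M.mulVec w = v := by
  rw [colSpace_eq_range]
  exact ⟨fun ⟨w, h⟩ => ⟨w, h⟩, fun ⟨w, h⟩ => ⟨w, h⟩⟩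

lemma exists_factor [Fintype C] (M : Matrix R C ℝ) (N : Matrix R C' ℝ)
    (h : colSpace N ≤ colSpace M) :
    ∃ W : Matrix C C' ℝ, ∀ rr c', N rr c' = ∑ c, M rr c * W c c' := by
  have hc : ∀ c' : C', ∃ w : C → ℝ, M.mulVec w = fun rr => N rr c' :=
    fun c' => mem_colSpace_iff.mp (h (col_mem_colSpace N c'))
  choose w hw using hc
  refine ⟨fun c c' => w c' c, fun rr c' => ?_⟩
  have := congrFun (hw c') rr
  simpa [Matrix.mulVec, dotProduct] using this.symm

lemma rowSpace_eq (M : Matrix R C ℝ) : rowSpace M = colSpace Mᵀ := rfl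

lemma exists_row_factor [Fintype R] (M : Matrix R C ℝ) (N : Matrix R' C ℝ)
    (h : rowSpace N ≤ rowSpace M) :
    ∃ Q : Matrix R' R ℝ, ∀ r' c, N r' c = ∑ rr, Q r' rr * M rr c := by
  obtain ⟨W, hW⟩ := exists_factor Mᵀ Nᵀ h
  exact ⟨fun r' rr => W rr r', fun r' c => by
    simpa [Matrix.transpose_apply, mul_comm] using hW c r'⟩

lemma mrank_eq_rank [Fintype C] (M : Matrix R C ℝ) : mrank M = M.rank := by
  rw [mrank, colSpace_eq_range]; rfl

lemma finrank_rowSpace [Fintype R] [Fintype C] (M : Matrix R C ℝ) :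
    Module.finrank ℝ ↥(rowSpace M) = mrank M := by
  rw [rowSpace_eq]
  have h : Module.finrank ℝ ↥(colSpace Mᵀ) = mrank Mᵀ := rfl
  rw [h, mrank_eq_rank, mrank_eq_rank, Matrix.rank_transpose]

lemma injective_of_mrank [Fintype R] [Fintype C] {M : Matrix R C ℝ}
    (h : mrank M = Fintype.card C) : Function.Injective M.mulVec := by
  have h1 : Module.finrank ℝ ↥(LinearMap.range M.mulVecLin) = Fintype.card C := by
    rw [← colSpace_eq_range]; exact h
  have h2 := LinearMap.finrank_range_add_finrank_ker M.mulVecLin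
  rw [h1, Module.finrank_pi] at h2
  have h3 : Module.finrank ℝ ↥(LinearMap.ker M.mulVecLin) = 0 := by omega
  have h5 := LinearMap.ker_eq_bot.mp (Submodule.finrank_eq_zero.mp h3)
  intro u v huv
  exact h5 (by simpa [Matrix.mulVecLin_apply] using huv)

@[simp] lemma takePre_snoc' {n : ℕ → ℕ} {k : ℕ} (z : PreIdx n k) (a : Fin (n k)) :
    takePre (snoc' z a) = z := by
  funext i
  simp [takePre, snoc', i.isLt]

@[simp] lemma snoc'_last {n : ℕ → ℕ} {k : ℕ} (z : PreIdx n k) (a : Fin (n k)) :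
    snoc' z a (Fin.last k) = a := by
  simp [snoc', Fin.last]

@[simp] lemma snoc'_takePre {n : ℕ → ℕ} {k : ℕ} (x : PreIdx n (k + 1)) :
    snoc' (takePre x) (x (Fin.last k)) = x := by
  funext i
  by_cases h : (i : ℕ) < k
  · simp [snoc', takePre, h]
  · have hik : i = Fin.last k := Fin.ext (by simp [Fin.last]; omega)
    subst hik
    simp

def snocEquiv (n : ℕ → ℕ) (k : ℕ) : (PreIdx n k × Fin (n k)) ≃ PreIdx n (k + 1) where
  toFun q := snoc' q.1 q.2
  invFun w := (takePre w, w (Fin.last k))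
  left_inv q := by simp
  right_inv w := by simp

def consSuf {n : ℕ → ℕ} {d k : ℕ} (a : Fin (n k)) (y : SufIdx n d (k + 1)) :
    SufIdx n d k :=
  fun i => if h : k + 1 ≤ (i.1 : ℕ) then y ⟨i.1, h⟩
    else Fin.cast (congrArg n (by have := i.2; omega : k = ((i.1 : Fin d) : ℕ))) a

lemma glue_snoc' {n : ℕ → ℕ} {d k : ℕ} (w : PreIdx n k) (a : Fin (n k))
    (y : SufIdx n d (k + 1)) : glue (snoc' w a) y = glue w (consSuf a y) := by
  funext i
  by_cases h1 : (i : ℕ) < k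
  · simp [glue, snoc', consSuf, h1, Nat.lt_succ_of_lt h1]
  · by_cases h2 : (i : ℕ) < k + 1
    · have h3 : ¬ (k + 1 ≤ (i : ℕ)) := by omega
      simp [glue, snoc', consSuf, h1, h2, h3]
    · have h3 : k + 1 ≤ (i : ℕ) := by omega
      simp [glue, snoc', consSuf, h1, h2, h3]

lemma glue_empty {n : ℕ → ℕ} {d : ℕ} (x : PreIdx n d) (y : SufIdx n d d) :
    glue x y = x := by
  funext i; simp [glue, i.isLt]

lemma slice_mem {n : ℕ → ℕ} {d : ℕ} (p : PreIdx n d → ℝ) (k : ℕ)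
    {v : PreIdx n (k + 1) → ℝ} (hv : v ∈ colSpace (unfold p (k + 1))) (a : Fin (n k)) :
    (fun w => v (snoc' w a)) ∈ colSpace (unfold p k) := by
  let Λ : (PreIdx n (k + 1) → ℝ) →ₗ[ℝ] (PreIdx n k → ℝ) :=
    LinearMap.funLeft ℝ ℝ (fun w => snoc' w a)
  have hle : colSpace (unfold p (k + 1)) ≤ (colSpace (unfold p k)).comap Λ := by
    rw [colSpace]
    apply Submodule.span_le.mpr
    rintro _ ⟨y, rfl⟩
    simp only [SetLike.mem_coe, Submodule.mem_comap]
    have hΛ : Λ (fun x => unfold p (k + 1) x y) = fun w => unfold p k w (consSuf a y) := by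
      funext w
      simp [Λ, LinearMap.funLeft, unfold, glue_snoc']
    rw [hΛ]
    exact col_mem_colSpace _ _
  exact hle hv

lemma self_mem_colSpace_unfold {n : ℕ → ℕ} {d : ℕ} (p : PreIdx n d → ℝ) :
    p ∈ colSpace (unfold p d) := by
  have h := col_mem_colSpace (unfold p d)
    (fun i => absurd i.1.isLt (Nat.not_lt.mpr i.2))
  have he : (fun x => unfold p d x (fun i => absurd i.1.isLt (Nat.not_lt.mpr i.2))) = p := by
    funext x; simp [unfold, glue_empty]
  rwa [he] at h

lemma sum_exchange {ι κ : Type*} [Fintype ι] [Fintype κ]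
    (f : ι → ℝ) (g : ι → κ → ℝ) (h : κ → ℝ) :
    (∑ i, f i * ∑ k, g i k * h k) = ∑ k, (∑ i, f i * g i k) * h k := by
  simp only [Finset.mul_sum, Finset.sum_mul, mul_assoc]
  exact Finset.sum_comm

end AuxLemmas
/-- Theorem: exact recovery for TT-RS.
With right sketches `T` and recursively contracted left sketches built from blocks `s`,
suppose (i) each `Φ̄_k` has the same column space as the `k`-th unfolding matrix,
(ii) each `Φ̃_k` has the same row space as `Φ̄_k`, and (iii) each coefficient matrix
`A_k` has rank `r_k`.  Then the reduced equations have unique solutions, which are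
cores of a tensor-train representation of `p` of rank `(r_1, …, r_{d-1})`.
(Here `d = d₀ + 2 ≥ 2`, indexing is 0-based: `B j`, `tildePhi … j` correspond to the
paper's `B_{j+1}`, `Φ̃_{j+1}`, `A j` to the paper's `A_{j+1}`, and `T k` to `T_{k+1}`;
the first left sketch block and the first/last cores carry dummy indices of size
`m 0 = 1`, `r 0 = 1`, `r d = 1`.) -/
theorem ttrs_exact_recovery
    (d₀ : ℕ) (n r ℓ m : ℕ → ℕ)
    (hr0 : r 0 = 1) (hrd : r (d₀ + 2) = 1) (hm0 : m 0 = 1)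
    (p : PreIdx n (d₀ + 2) → ℝ)
    (hrank : ∀ k, 1 ≤ k → k ≤ d₀ + 1 → mrank (unfold p k) = r k)
    (hℓ : ∀ k, 1 ≤ k → k ≤ d₀ + 1 → r k ≤ ℓ k)
    (T : ∀ k : ℕ, SufIdx n (d₀ + 2) k → Fin (ℓ k) → ℝ)
    (s : ∀ j : ℕ, Fin (m (j + 1)) → Fin (n j) → Fin (m j) → ℝ)
    (B : ∀ j : ℕ, Fin (m j) → Fin (n j) → Fin (r (j + 1)) → ℝ)
    (hBortho : ∀ j, j ≤ d₀ →
      (Matrix.of fun (q : Fin (m j) × Fin (n j)) (α : Fin (r (j + 1))) => B j q.1 q.2 α)ᵀ *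
        (Matrix.of fun (q : Fin (m j) × Fin (n j)) (α : Fin (r (j + 1))) => B j q.1 q.2 α) = 1)
    (hBspan : ∀ j, j ≤ d₀ →
      colSpace (Matrix.of fun (q : Fin (m j) × Fin (n j)) (α : Fin (r (j + 1))) =>
          B j q.1 q.2 α) =
        colSpace (Matrix.of fun (q : Fin (m j) × Fin (n j)) (γ : Fin (ℓ (j + 1))) =>
          tildePhi p T s j q.1 q.2 γ))
    (Bd : Fin (m (d₀ + 1)) → Fin (n (d₀ + 1)) → ℝ)
    (hBd : ∀ β xd, Bd β xd =
      ∑ z : PreIdx n (d₀ + 1), leftSketch s (d₀ + 1) β z * p (snoc' z xd))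
    (A : ∀ j : ℕ, Fin (m (j + 1)) → Fin (r (j + 1)) → ℝ)
    (hA : ∀ j, j ≤ d₀ → ∀ β α,
      A j β α = ∑ x : Fin (n j), ∑ c : Fin (m j), s j β x c * B j c x α)
    (hi : ∀ k, 1 ≤ k → k ≤ d₀ + 1 →
      colSpace (Matrix.of (rightSketched p T k)) = colSpace (unfold p k))
    (hii : ∀ j, 1 ≤ j → j ≤ d₀ →
      rowSpace (Matrix.of fun (q : Fin (m j) × Fin (n j)) (γ : Fin (ℓ (j + 1))) =>
          tildePhi p T s j q.1 q.2 γ) =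
        rowSpace (Matrix.of (rightSketched p T (j + 1))))
    (hiii : ∀ j, j ≤ d₀ → mrank (Matrix.of (A j)) = r (j + 1)) :
    (∃! G : CoreType n r (d₀ + 2), TTRSEqs d₀ n r m B Bd A G) ∧
      ∀ G : CoreType n r (d₀ + 2), TTRSEqs d₀ n r m B Bd A G →
        ∀ x, p x = ttContract G x := by
  obtain ⟨c₀⟩ : Nonempty (Fin (m 0)) := ⟨⟨0, by omega⟩⟩
  have hc₀uniq : ∀ c : Fin (m 0), c = c₀ := fun c =>
    Fin.ext (by have := c.isLt; have := c₀.isLt; omega)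
  -- Step 1: the exact bases Psi
  have hΨex : ∀ j : ℕ, ∃ Ψ : Matrix (PreIdx n (j + 1)) (Fin (r (j + 1))) ℝ, j ≤ d₀ →
      (∀ c x α, (∑ z : PreIdx n j, leftSketch s j c z * Ψ (snoc' z x) α) = B j c x α) ∧
      colSpace Ψ = colSpace (unfold p (j + 1)) := by
    intro j
    by_cases hj : j ≤ d₀
    · obtain ⟨Rj, hRj⟩ := exists_factor
        (Matrix.of fun (q : Fin (m j) × Fin (n j)) (γ : Fin (ℓ (j + 1))) =>
          tildePhi p T s j q.1 q.2 γ)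
        (Matrix.of fun (q : Fin (m j) × Fin (n j)) (α : Fin (r (j + 1))) => B j q.1 q.2 α)
        (le_of_eq (hBspan j hj))
      simp only [Matrix.of_apply] at hRj
      refine ⟨Matrix.of fun w α => ∑ γ, rightSketched p T (j + 1) w γ * Rj γ α,
        fun _ => ⟨?_, ?_⟩⟩
      · -- sketch property
        intro c x α
        calc (∑ z : PreIdx n j, leftSketch s j c z *
                (Matrix.of fun w α => ∑ γ, rightSketched p T (j + 1) w γ * Rj γ α)
                  (snoc' z x) α)
            = ∑ z : PreIdx n j, leftSketch s j c z *
                ∑ γ, rightSketched p T (j + 1) (snoc' z x) γ * Rj γ α := rfl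
          _ = ∑ γ, (∑ z : PreIdx n j, leftSketch s j c z *
                rightSketched p T (j + 1) (snoc' z x) γ) * Rj γ α := sum_exchange _ _ _
          _ = ∑ γ, tildePhi p T s j c x γ * Rj γ α := rfl
          _ = B j c x α := (hRj (c, x) α).symm
      · -- column space
        apply le_antisymm
        · rw [← hi (j + 1) (by omega) (by omega), colSpace]
          apply Submodule.span_le.mpr
          rintro _ ⟨α, rfl⟩
          simp only [SetLike.mem_coe]
          rw [mem_colSpace_iff]
          refine ⟨fun γ => Rj γ α, ?_⟩
          funext w
          simp [Matrix.mulVec, dotProduct]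
        · -- reverse inclusion
          have hrow : rowSpace (Matrix.of (rightSketched p T (j + 1))) ≤
              rowSpace (Matrix.of fun (q : Fin (m j) × Fin (n j)) (γ : Fin (ℓ (j + 1))) =>
                tildePhi p T s j q.1 q.2 γ) := by
            rcases Nat.eq_zero_or_pos j with hj0 | hj0
            · subst hj0
              rw [rowSpace]
              apply Submodule.span_le.mpr
              rintro _ ⟨w, rfl⟩
              have hwrow : (fun γ => Matrix.of (rightSketched p T 1) w γ) =
                  fun γ => (Matrix.of fun (q : Fin (m 0) × Fin (n 0)) γ =>
                    tildePhi p T s 0 q.1 q.2 γ) (c₀, w (Fin.last 0)) γ := by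
                funext γ
                show rightSketched p T 1 w γ = tildePhi p T s 0 c₀ (w (Fin.last 0)) γ
                rw [tildePhi, Fintype.sum_unique]
                have hz : (default : PreIdx n 0) = takePre w := Subsingleton.elim _ _
                rw [hz, snoc'_takePre]
                simp [leftSketch]
              exact Submodule.subset_span ⟨(c₀, w (Fin.last 0)), hwrow.symm⟩
            · exact le_of_eq (hii j hj0 hj).symm
          obtain ⟨Q, hQ⟩ := exists_row_factor
            (Matrix.of fun (q : Fin (m j) × Fin (n j)) (γ : Fin (ℓ (j + 1))) =>
              tildePhi p T s j q.1 q.2 γ)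
            (Matrix.of (rightSketched p T (j + 1))) hrow
          simp only [Matrix.of_apply] at hQ
          obtain ⟨t, ht⟩ := exists_factor
            (Matrix.of fun (q : Fin (m j) × Fin (n j)) (α : Fin (r (j + 1))) => B j q.1 q.2 α)
            (Matrix.of fun (q : Fin (m j) × Fin (n j)) (γ : Fin (ℓ (j + 1))) =>
              tildePhi p T s j q.1 q.2 γ)
            (le_of_eq (hBspan j hj).symm)
          simp only [Matrix.of_apply] at ht
          have key : ∀ w γ, rightSketched p T (j + 1) w γ =
              ∑ α, (∑ γ', rightSketched p T (j + 1) w γ' * Rj γ' α) * t α γ := by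
            intro w γ
            have hPsiQ : ∀ α, (∑ q : Fin (m j) × Fin (n j), Q w q * B j q.1 q.2 α)
                = ∑ γ', rightSketched p T (j + 1) w γ' * Rj γ' α := by
              intro α
              calc (∑ q : Fin (m j) × Fin (n j), Q w q * B j q.1 q.2 α)
                  = ∑ q : Fin (m j) × Fin (n j), Q w q *
                      ∑ γ', tildePhi p T s j q.1 q.2 γ' * Rj γ' α := by
                    refine Finset.sum_congr rfl fun q _ => ?_
                    rw [show B j q.1 q.2 α = ∑ γ', tildePhi p T s j q.1 q.2 γ' * Rj γ' α
                      from hRj q α]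
                _ = ∑ γ', (∑ q : Fin (m j) × Fin (n j), Q w q * tildePhi p T s j q.1 q.2 γ')
                      * Rj γ' α := sum_exchange _ _ _
                _ = ∑ γ', rightSketched p T (j + 1) w γ' * Rj γ' α := by
                    refine Finset.sum_congr rfl fun γ' _ => ?_
                    rw [← hQ w γ']
            calc rightSketched p T (j + 1) w γ
                = ∑ q : Fin (m j) × Fin (n j), Q w q * tildePhi p T s j q.1 q.2 γ := hQ w γ
              _ = ∑ q : Fin (m j) × Fin (n j), Q w q * ∑ α, B j q.1 q.2 α * t α γ := by
                  refine Finset.sum_congr rfl fun q _ => ?_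
                  rw [show tildePhi p T s j q.1 q.2 γ = ∑ α, B j q.1 q.2 α * t α γ
                    from ht q γ]
              _ = ∑ α, (∑ q : Fin (m j) × Fin (n j), Q w q * B j q.1 q.2 α) * t α γ :=
                  sum_exchange _ _ _
              _ = ∑ α, (∑ γ', rightSketched p T (j + 1) w γ' * Rj γ' α) * t α γ := by
                  refine Finset.sum_congr rfl fun α _ => ?_
                  rw [hPsiQ α]
          rw [← hi (j + 1) (by omega) (by omega), colSpace]
          apply Submodule.span_le.mpr
          rintro _ ⟨γ, rfl⟩
          simp only [SetLike.mem_coe]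
          rw [mem_colSpace_iff]
          refine ⟨fun α => t α γ, ?_⟩
          funext w
          simp only [Matrix.mulVec, dotProduct, Matrix.of_apply]
          exact (key w γ).symm
    · exact ⟨0, fun h => absurd h hj⟩
  choose Psi hPsi using hΨex
  -- Step 2: A in terms of Psi
  have hAΨ : ∀ j, j ≤ d₀ → ∀ β α,
      A j β α = ∑ w : PreIdx n (j + 1), leftSketch s (j + 1) β w * Psi j w α := by
    intro j hj β α
    have hls : ∀ (z : PreIdx n j) (x : Fin (n j)),
        leftSketch s (j + 1) β (snoc' z x) = ∑ c, s j β x c * leftSketch s j c z := by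
      intro z x
      rw [leftSketch]
      simp only [snoc'_last, takePre_snoc']
    calc A j β α
        = ∑ x : Fin (n j), ∑ c : Fin (m j), s j β x c * B j c x α := hA j hj β α
      _ = ∑ x : Fin (n j), ∑ z : PreIdx n j,
            (∑ c : Fin (m j), s j β x c * leftSketch s j c z) * Psi j (snoc' z x) α := by
          refine Finset.sum_congr rfl fun x _ => ?_
          calc (∑ c : Fin (m j), s j β x c * B j c x α)
              = ∑ c : Fin (m j), s j β x c *
                  ∑ z : PreIdx n j, leftSketch s j c z * Psi j (snoc' z x) α := by
                refine Finset.sum_congr rfl fun c _ => ?_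
                rw [(hPsi j hj).1 c x α]
            _ = ∑ z : PreIdx n j,
                  (∑ c : Fin (m j), s j β x c * leftSketch s j c z) *
                    Psi j (snoc' z x) α := sum_exchange _ _ _
      _ = ∑ z : PreIdx n j, ∑ x : Fin (n j),
            (∑ c : Fin (m j), s j β x c * leftSketch s j c z) * Psi j (snoc' z x) α :=
          Finset.sum_comm
      _ = ∑ q : PreIdx n j × Fin (n j),
            (∑ c : Fin (m j), s j β q.2 c * leftSketch s j c q.1) *
              Psi j (snoc' q.1 q.2) α :=
          (Fintype.sum_prod_type (f := fun q : PreIdx n j × Fin (n j) =>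
            (∑ c : Fin (m j), s j β q.2 c * leftSketch s j c q.1) *
              Psi j (snoc' q.1 q.2) α)).symm
      _ = ∑ w : PreIdx n (j + 1), leftSketch s (j + 1) β w * Psi j w α := by
          refine Fintype.sum_equiv (snocEquiv n j) _ _ fun q => ?_
          simp only [snocEquiv, Equiv.coe_fn_mk]
          rw [hls q.1 q.2]
  -- Step 3: cores
  have hGmidex : ∀ j : ℕ, ∃ g : Fin (r (j + 1)) → Fin (n (j + 1)) → Fin (r (j + 2)) → ℝ,
      j + 1 ≤ d₀ → ∀ x α,
        (Psi j).mulVec (fun c => g c x α) = fun z => Psi (j + 1) (snoc' z x) α := by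
    intro j
    by_cases hj : j + 1 ≤ d₀
    · have hmem : ∀ (x : Fin (n (j + 1))) (α : Fin (r (j + 2))),
          ∃ w : Fin (r (j + 1)) → ℝ,
            (Psi j).mulVec w = fun z => Psi (j + 1) (snoc' z x) α := by
        intro x α
        have h1 : (fun w => Psi (j + 1) w α) ∈ colSpace (unfold p (j + 2)) := by
          rw [← (hPsi (j + 1) hj).2]
          exact col_mem_colSpace _ _
        have h2 := slice_mem p (j + 1) h1 x
        exact mem_colSpace_iff.mp (by rw [(hPsi j (by omega)).2]; exact h2)
      choose g hg using hmem
      exact ⟨fun c x α => g x α c, fun _ x α => hg x α⟩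
    · exact ⟨fun _ _ _ => 0, fun h => absurd h hj⟩
  choose Gmid hGmid using hGmidex
  have hGlastex : ∃ g : Fin (r (d₀ + 1)) → Fin (n (d₀ + 1)) → Fin (r (d₀ + 2)) → ℝ,
      ∀ x b, (Psi d₀).mulVec (fun c => g c x b) = fun z => p (snoc' z x) := by
    have hmem : ∀ x : Fin (n (d₀ + 1)),
        ∃ w, (Psi d₀).mulVec w = fun z => p (snoc' z x) := by
      intro x
      have h1 := slice_mem p (d₀ + 1) (self_mem_colSpace_unfold p) x
      exact mem_colSpace_iff.mp (by rw [(hPsi d₀ le_rfl).2]; exact h1)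
    choose g hg using hmem
    exact ⟨fun c x _ => g x c, fun x b => hg x⟩
  obtain ⟨Glast, hGlast⟩ := hGlastex
  have hGex : ∃ G : CoreType n r (d₀ + 2),
      (∀ (a : Fin (r 0)) (x : Fin (n 0)) (α : Fin (r 1)),
        G ⟨0, by omega⟩ a x α = B 0 c₀ x α) ∧
      (∀ j : ℕ, ∀ _hj : j + 1 ≤ d₀, ∀ (c : Fin (r (j + 1))) (x : Fin (n (j + 1))) (α : Fin (r (j + 2))),
        G ⟨j + 1, by omega⟩ c x α = Gmid j c x α) ∧
      (∀ (c : Fin (r (d₀ + 1))) (x : Fin (n (d₀ + 1))) (b : Fin (r (d₀ + 2))),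
        G ⟨d₀ + 1, by omega⟩ c x b = Glast c x b) := by
    refine ⟨fun k c x b =>
      if h0 : (k : ℕ) = 0 then
        B 0 c₀ (Fin.cast (congrArg n h0) x) (Fin.cast (congrArg (fun t => r (t + 1)) h0) b)
      else if hd : (k : ℕ) = d₀ + 1 then
        Glast (Fin.cast (congrArg r hd) c) (Fin.cast (congrArg n hd) x)
          (Fin.cast (congrArg (fun t => r (t + 1)) hd) b)
      else
        Gmid ((k : ℕ) - 1)
          (Fin.cast (congrArg r (by omega : (k : ℕ) = (k : ℕ) - 1 + 1)) c)
          (Fin.cast (congrArg n (by omega : (k : ℕ) = (k : ℕ) - 1 + 1)) x)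
          (Fin.cast (congrArg (fun t => r (t + 1)) (by omega : (k : ℕ) = (k : ℕ) - 1 + 1)) b),
      ?_, ?_, ?_⟩
    · intro a x α
      beta_reduce
      rw [dif_pos (show ((⟨0, by omega⟩ : Fin (d₀ + 2)) : ℕ) = 0 from rfl)]
      rfl
    · intro j hj c x α
      beta_reduce
      rw [dif_neg (show ¬ ((⟨j + 1, by omega⟩ : Fin (d₀ + 2)) : ℕ) = 0 from by
            simp)]
      rw [dif_neg (show ¬ ((⟨j + 1, by omega⟩ : Fin (d₀ + 2)) : ℕ) = d₀ + 1 from by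
            simp; omega)]
      rfl
    · intro c x b
      beta_reduce
      rw [dif_neg (show ¬ ((⟨d₀ + 1, by omega⟩ : Fin (d₀ + 2)) : ℕ) = 0 from by simp)]
      rw [dif_pos (show ((⟨d₀ + 1, by omega⟩ : Fin (d₀ + 2)) : ℕ) = d₀ + 1 from rfl)]
      rfl
  obtain ⟨G₀, hG0, hGm, hGl⟩ := hGex
  -- Step 4: G₀ satisfies the equations
  have hEqs : TTRSEqs d₀ n r m B Bd A G₀ := by
    refine ⟨?_, ?_, ?_⟩
    · intro a c x α
      rw [hG0 a x α, hc₀uniq c]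
    · intro j hj β x α
      calc (∑ c : Fin (r (j + 1)), A j β c * G₀ ⟨j + 1, by omega⟩ c x α)
          = ∑ c : Fin (r (j + 1)), A j β c * Gmid j c x α := by
            refine Finset.sum_congr rfl fun c _ => ?_
            rw [hGm j hj c x α]
        _ = ∑ c : Fin (r (j + 1)),
              (∑ w : PreIdx n (j + 1), leftSketch s (j + 1) β w * Psi j w c) *
                Gmid j c x α := by
            refine Finset.sum_congr rfl fun c _ => ?_
            rw [← hAΨ j (by omega) β c]
        _ = ∑ w : PreIdx n (j + 1), leftSketch s (j + 1) β w *
              ∑ c, Psi j w c * Gmid j c x α := (sum_exchange _ _ _).symm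
        _ = ∑ w : PreIdx n (j + 1), leftSketch s (j + 1) β w *
              Psi (j + 1) (snoc' w x) α := by
            refine Finset.sum_congr rfl fun w _ => ?_
            congr 1
            have := congrFun (hGmid j hj x α) w
            simpa [Matrix.mulVec, dotProduct] using this
        _ = B (j + 1) β x α := (hPsi (j + 1) hj).1 β x α
    · intro β x b
      calc (∑ c : Fin (r (d₀ + 1)), A d₀ β c * G₀ ⟨d₀ + 1, by omega⟩ c x b)
          = ∑ c : Fin (r (d₀ + 1)), A d₀ β c * Glast c x b := by
            refine Finset.sum_congr rfl fun c _ => ?_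
            rw [hGl c x b]
        _ = ∑ c : Fin (r (d₀ + 1)),
              (∑ w : PreIdx n (d₀ + 1), leftSketch s (d₀ + 1) β w * Psi d₀ w c) *
                Glast c x b := by
            refine Finset.sum_congr rfl fun c _ => ?_
            rw [← hAΨ d₀ le_rfl β c]
        _ = ∑ w : PreIdx n (d₀ + 1), leftSketch s (d₀ + 1) β w *
              ∑ c, Psi d₀ w c * Glast c x b := (sum_exchange _ _ _).symm
        _ = ∑ w : PreIdx n (d₀ + 1), leftSketch s (d₀ + 1) β w * p (snoc' w x) := by
            refine Finset.sum_congr rfl fun w _ => ?_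
            congr 1
            have := congrFun (hGlast x b) w
            simpa [Matrix.mulVec, dotProduct] using this
        _ = Bd β x := (hBd β x).symm
  -- Step 5: uniqueness
  have hAinj : ∀ j, j ≤ d₀ → Function.Injective (Matrix.of (A j)).mulVec := by
    intro j hj
    exact injective_of_mrank (by rw [hiii j hj, Fintype.card_fin])
  have huniq : ∀ G1 G2 : CoreType n r (d₀ + 2),
      TTRSEqs d₀ n r m B Bd A G1 → TTRSEqs d₀ n r m B Bd A G2 → G1 = G2 := by
    intro G1 G2 h1 h2
    funext k c x b
    obtain ⟨kv, hkv⟩ := k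
    rcases Nat.eq_zero_or_pos kv with rfl | hpos
    · rw [h1.1 c c₀ x b, h2.1 c c₀ x b]
    · by_cases hlast : kv = d₀ + 1
      · subst hlast
        have hv : (Matrix.of (A d₀)).mulVec (fun c => G1 ⟨d₀ + 1, hkv⟩ c x b) =
            (Matrix.of (A d₀)).mulVec (fun c => G2 ⟨d₀ + 1, hkv⟩ c x b) := by
          funext β
          simp only [Matrix.mulVec, dotProduct, Matrix.of_apply]
          rw [h1.2.2 β x b, h2.2.2 β x b]
        exact congrFun (hAinj d₀ le_rfl hv) c
      · obtain ⟨j, rfl⟩ : ∃ j, kv = j + 1 := ⟨kv - 1, by omega⟩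
        have hj : j + 1 ≤ d₀ := by omega
        have hv : (Matrix.of (A j)).mulVec (fun c => G1 ⟨j + 1, hkv⟩ c x b) =
            (Matrix.of (A j)).mulVec (fun c => G2 ⟨j + 1, hkv⟩ c x b) := by
          funext β
          simp only [Matrix.mulVec, dotProduct, Matrix.of_apply]
          rw [h1.2.1 j hj β x b, h2.2.1 j hj β x b]
        exact congrFun (hAinj j (by omega) hv) c
  -- Step 6: contraction
  have hpre : ∀ j, j ≤ d₀ → ∀ (h : j + 1 ≤ d₀ + 2) (x : PreIdx n (j + 1))
      (a : Fin (r 0)) (b : Fin (r (j + 1))),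
      ttPrefixF G₀ (j + 1) h x a b = Psi j x b := by
    intro j
    induction j with
    | zero =>
      intro _ h x a b
      rw [ttPrefixF]
      rw [Finset.sum_eq_single a]
      · rw [ttPrefixF]
        rw [if_pos rfl, one_mul, hG0 a (x (Fin.last 0)) b]
        rw [← (hPsi 0 (Nat.zero_le d₀)).1 c₀ (x (Fin.last 0)) b, Fintype.sum_unique]
        have hz : (default : PreIdx n 0) = takePre x := Subsingleton.elim _ _
        rw [hz, snoc'_takePre]
        simp [leftSketch]
      · intro c _ hca
        exact absurd (Fin.ext (by have h1 := c.isLt; have h2 := a.isLt; omega) :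
          c = a) hca
      · intro hmem
        exact absurd (Finset.mem_univ a) hmem
    | succ j ih =>
      intro hj h x a b
      rw [ttPrefixF]
      calc (∑ c : Fin (r (j + 1)), ttPrefixF G₀ (j + 1) (by omega) (takePre x) a c *
              G₀ ⟨j + 1, h⟩ c (x (Fin.last (j + 1))) b)
          = ∑ c : Fin (r (j + 1)), Psi j (takePre x) c *
              Gmid j c (x (Fin.last (j + 1))) b := by
            refine Finset.sum_congr rfl fun c _ => ?_
            rw [ih (by omega) (by omega) (takePre x) a c,
              hGm j (by omega) c (x (Fin.last (j + 1))) b]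
        _ = Psi (j + 1) (snoc' (takePre x) (x (Fin.last (j + 1)))) b := by
            have := congrFun (hGmid j (by omega) (x (Fin.last (j + 1))) b) (takePre x)
            simpa [Matrix.mulVec, dotProduct] using this
        _ = Psi (j + 1) x b := by rw [snoc'_takePre]
  have hfull : ∀ (x : PreIdx n (d₀ + 2)) (a : Fin (r 0)) (b : Fin (r (d₀ + 2))),
      ttPrefixF G₀ (d₀ + 2) le_rfl x a b = p x := by
    intro x a b
    show ttPrefixF G₀ (d₀ + 1 + 1) le_rfl x a b = p x
    rw [ttPrefixF]
    calc (∑ c : Fin (r (d₀ + 1)), ttPrefixF G₀ (d₀ + 1) (by omega) (takePre x) a c *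
            G₀ ⟨d₀ + 1, by omega⟩ c (x (Fin.last (d₀ + 1))) b)
        = ∑ c : Fin (r (d₀ + 1)), Psi d₀ (takePre x) c *
            Glast c (x (Fin.last (d₀ + 1))) b := by
          refine Finset.sum_congr rfl fun c _ => ?_
          rw [hpre d₀ le_rfl (by omega) (takePre x) a c,
            hGl c (x (Fin.last (d₀ + 1))) b]
      _ = p (snoc' (takePre x) (x (Fin.last (d₀ + 1)))) := by
          have := congrFun (hGlast (x (Fin.last (d₀ + 1))) b) (takePre x)
          simpa [Matrix.mulVec, dotProduct] using this
      _ = p x := by rw [snoc'_takePre]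
  refine ⟨⟨G₀, hEqs, fun G hG => huniq G G₀ hG hEqs⟩, ?_⟩
  intro G hG x
  rw [huniq G G₀ hG hEqs, ttContract]
  simp only [hfull x, Finset.sum_const, Finset.card_univ, Fintype.card_fin, hr0, hrd,
    one_smul]
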